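/- (Birman–Schwinger correspondence, direction ii) Suppose μ > 0, z > max_{p,q} E(K;p,q), Δ_μ(K,p;z) := 1 + μ∫η(dt)/(E(K;p,t)-z) > 0 for all p, and ψ ∈ L²(T^d) satisfies the Birman–Schwinger equation ψ(q) = μ∫ Δ_μ(K,q;z)^{-1/2} Δ_μ(K,p;z)^{-1/2} (E(K;p,q)-z)^{-1} ψ(p) η(dp). Then f(p,q) := -μ[φ(p)-φ(q)]/(E(K;p,q)-z) with φ(p) = Δ_μ(K,p;z)^{-1/2}ψ(p) satisfies H_μ(K)f = zf and f ∈ L^{2,a}((T^d)²). -/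

import Mathlib

open MeasureTheory Real

instance : Fact (0 < 2 * π) := ⟨by positivity⟩

/-- Equip the circle `ℝ/2πℤ` with its Haar measure. -/
noncomputable instance : MeasureSpace Real.Angle :=
  inferInstanceAs (MeasureSpace (AddCircle (2 * π)))

instance : SigmaFinite (volume : Measure Real.Angle) :=
  inferInstanceAs (SigmaFinite (volume : Measure (AddCircle (2 * π))))

/-- The lattice dispersion relation `ε(p) = 2∑ᵢ (1 - cos pⁱ)` on the torus `T^d`. -/
noncomputable def eps (d : ℕ) (p : Fin d → Real.Angle) : ℝ :=
  2 * ∑ i, (1 - (p i).cos)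

/-- The normalized Haar measure `η` on the torus `T^d`. -/
noncomputable def haarT (d : ℕ) : Measure (Fin d → Real.Angle) :=
  (ENNReal.ofReal ((2 * π) ^ d))⁻¹ • volume

/-- The three-particle dispersion `E(K;p,q) = ε(p) + ε(q) + γ ε(K - p - q)`. -/
noncomputable def Edisp (d : ℕ) (γ : ℝ) (K p q : Fin d → Real.Angle) : ℝ :=
  eps d p + eps d q + γ * eps d (K - p - q)

instance : CompactSpace Real.Angle := inferInstanceAs (CompactSpace (AddCircle (2 * π)))
instance : BorelSpace Real.Angle := inferInstanceAs (BorelSpace (AddCircle (2 * π)))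
instance : SecondCountableTopology Real.Angle :=
  inferInstanceAs (SecondCountableTopology (AddCircle (2 * π)))
example (d : ℕ) : CompactSpace (Fin d → Real.Angle) := inferInstance
example (d : ℕ) : FirstCountableTopology (Fin d → Real.Angle) := inferInstance
example (d : ℕ) : IsTopologicalAddGroup (Fin d → Real.Angle) := inferInstance

lemma angle_univ : (volume : Measure Real.Angle) Set.univ = ENNReal.ofReal (2 * π) :=
  AddCircle.measure_univ (2 * π)

instance haarT_prob (d : ℕ) : IsProbabilityMeasure (haarT d) := by
  constructor
  have h2π : (0:ℝ) < 2 * π := by positivity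
  simp only [haarT, Measure.smul_apply, smul_eq_mul]
  rw [show (volume : Measure (Fin d → Real.Angle)) Set.univ = ENNReal.ofReal ((2*π))^d by
    rw [← Set.pi_univ Set.univ, volume_pi_pi]
    simp [angle_univ]]
  rw [← ENNReal.ofReal_pow h2π.le]
  rw [ENNReal.inv_mul_cancel]
  · simp [ENNReal.ofReal_eq_zero]; positivity
  · exact ENNReal.ofReal_ne_top

lemma continuous_eps (d : ℕ) : Continuous (eps d) := by
  unfold eps
  exact continuous_const.mul (continuous_finset_sum _ fun i _ =>
    continuous_const.sub ((Real.Angle.continuous_cos).comp (continuous_apply i)))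

lemma continuous_Edisp (d : ℕ) (γ : ℝ) (K : Fin d → Real.Angle) :
    Continuous (fun x : (Fin d → Real.Angle) × (Fin d → Real.Angle) => Edisp d γ K x.1 x.2) := by
  unfold Edisp
  exact (((continuous_eps d).comp continuous_fst).add
    ((continuous_eps d).comp continuous_snd)).add
    (continuous_const.mul ((continuous_eps d).comp
      ((continuous_const.sub continuous_fst).sub continuous_snd)))

lemma Edisp_symm (d : ℕ) (γ : ℝ) (K p q : Fin d → Real.Angle) :
    Edisp d γ K p q = Edisp d γ K q p := by
  unfold Edisp
  rw [sub_right_comm]; ring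

lemma exists_gap (d : ℕ) (γ z : ℝ) (K : Fin d → Real.Angle)
    (hz : ∀ p q, Edisp d γ K p q < z) :
    ∃ C > 0, ∀ p q, Edisp d γ K p q ≤ z - C := by
  obtain ⟨x₀, -, hx₀⟩ := isCompact_univ.exists_isMaxOn Set.univ_nonempty
    (continuous_Edisp d γ K).continuousOn
  refine ⟨z - Edisp d γ K x₀.1 x₀.2, by linarith [hz x₀.1 x₀.2], fun p q => ?_⟩
  have := hx₀ (Set.mem_univ (p, q))
  simpa using this

lemma continuous_I (d : ℕ) (γ z : ℝ) (K : Fin d → Real.Angle)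
    (hz : ∀ p q, Edisp d γ K p q < z) :
    Continuous (fun p => ∫ t, (Edisp d γ K p t - z)⁻¹ ∂(haarT d)) := by
  obtain ⟨C, hC, hCle⟩ := exists_gap d γ z K hz
  have hne : ∀ p q, Edisp d γ K p q - z ≠ 0 := fun p q => by
    have := hz p q; linarith
  apply continuous_of_dominated (bound := fun _ => C⁻¹)
  · intro p
    exact (((continuous_Edisp d γ K).comp (continuous_const.prodMk continuous_id)).sub
      continuous_const).inv₀ (fun t => hne p t) |>.aestronglyMeasurable
  · intro p
    filter_upwards with t
    rw [norm_inv, Real.norm_eq_abs, abs_of_nonpos (by linarith [hz p t])]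
    rw [inv_le_inv₀ (by linarith [hCle p t]) hC]
    linarith [hCle p t]
  · exact integrable_const _
  · filter_upwards with t
    exact (((continuous_Edisp d γ K).comp (continuous_id.prodMk continuous_const)).sub
      continuous_const).inv₀ (fun p => hne p t)

lemma contk (d : ℕ) (γ z : ℝ) (K : Fin d → Real.Angle)
    (hz : ∀ p q, Edisp d γ K p q < z) (p : Fin d → Real.Angle) :
    Continuous (fun t => (Edisp d γ K p t - z)⁻¹) :=
  (((continuous_Edisp d γ K).comp (continuous_const.prodMk continuous_id)).sub
    continuous_const).inv₀ (fun t => by have := hz p t; intro h; simp at h; linarith)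

/-- Birman–Schwinger, direction ii: if `ψ ∈ L²(T^d)` solves the
Birman–Schwinger equation, then `f(p,q) = -μ[φ(p)-φ(q)]/(E(K;p,q)-z)` with
`φ = Δ_μ^{-1/2}ψ` is antisymmetric, square integrable, and solves `H_μ(K)f = zf`. -/
theorem stmt12 (d : ℕ) (γ μ z : ℝ) (hγ : 0 < γ) (hμ : 0 < μ) (K : Fin d → Real.Angle)
    (hz : ∀ p q, Edisp d γ K p q < z)
    (hΔ : ∀ p, 0 < 1 + μ * ∫ t, (Edisp d γ K p t - z)⁻¹ ∂(haarT d))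
    (ψ : (Fin d → Real.Angle) → ℝ) (hψ : MemLp ψ 2 (haarT d))
    (hBS : ∀ᵐ q ∂(haarT d),
      ψ q = μ * ∫ p,
        (Real.sqrt (1 + μ * ∫ t, (Edisp d γ K q t - z)⁻¹ ∂(haarT d)))⁻¹
        * (Real.sqrt (1 + μ * ∫ t, (Edisp d γ K p t - z)⁻¹ ∂(haarT d)))⁻¹
        * (Edisp d γ K p q - z)⁻¹ * ψ p ∂(haarT d)) :
    let φ : (Fin d → Real.Angle) → ℝ := fun p =>
      (Real.sqrt (1 + μ * ∫ t, (Edisp d γ K p t - z)⁻¹ ∂(haarT d)))⁻¹ * ψ p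
    let f : (Fin d → Real.Angle) × (Fin d → Real.Angle) → ℝ := fun x =>
      -μ * (φ x.1 - φ x.2) / (Edisp d γ K x.1 x.2 - z)
    MemLp f 2 ((haarT d).prod (haarT d)) ∧
    (∀ p q, f (p, q) = -f (q, p)) ∧
    (∀ᵐ x ∂((haarT d).prod (haarT d)),
      Edisp d γ K x.1 x.2 * f x
        + μ * ((∫ t, f (x.1, t) ∂(haarT d)) + ∫ t, f (t, x.2) ∂(haarT d)) = z * f x) := by
  intro φ f
  obtain ⟨C, hC, hCle⟩ := exists_gap d γ z K hz
  have hEne : ∀ p q, Edisp d γ K p q - z ≠ 0 := fun p q => by have := hz p q; linarith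
  have hkbd : ∀ p q, |(Edisp d γ K p q - z)⁻¹| ≤ C⁻¹ := by
    intro p q
    rw [abs_inv, abs_of_nonpos (by linarith [hz p q])]
    rw [inv_le_inv₀ (by linarith [hCle p q]) hC]
    linarith [hCle p q]
  -- Δ and its positive lower bound
  set Δ : (Fin d → Real.Angle) → ℝ :=
    fun p => 1 + μ * ∫ t, (Edisp d γ K p t - z)⁻¹ ∂(haarT d) with hΔdef
  have hΔcont : Continuous Δ :=
    continuous_const.add (continuous_const.mul (continuous_I d γ z K hz))
  obtain ⟨p₀, -, hp₀⟩ := isCompact_univ.exists_isMinOn Set.univ_nonempty hΔcont.continuousOn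
  set c := Δ p₀ with hcdef
  have hc : 0 < c := hΔ p₀
  have hcle : ∀ p, c ≤ Δ p := fun p => hp₀ (Set.mem_univ p)
  -- sΔ
  set sΔ : (Fin d → Real.Angle) → ℝ := fun p => (Real.sqrt (Δ p))⁻¹ with hsΔdef
  have hsΔpos : ∀ p, 0 < sΔ p := fun p => inv_pos.2 (Real.sqrt_pos.2 (hΔ p))
  have hsΔcont : Continuous sΔ :=
    (hΔcont.sqrt).inv₀ (fun p => (Real.sqrt_pos.2 (hΔ p)).ne')
  have hsΔbd : ∀ p, sΔ p ≤ (Real.sqrt c)⁻¹ := fun p => by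
    rw [inv_le_inv₀ (Real.sqrt_pos.2 (hΔ p)) (Real.sqrt_pos.2 hc)]
    exact Real.sqrt_le_sqrt (hcle p)
  have hφ_eq : ∀ p, φ p = sΔ p * ψ p := fun p => rfl
  have hφm : AEStronglyMeasurable φ (haarT d) := hsΔcont.aestronglyMeasurable.mul hψ.1
  have hφ2 : MemLp φ 2 (haarT d) := by
    refine hψ.of_le_mul (c := (Real.sqrt c)⁻¹) hφm (ae_of_all _ fun p => ?_)
    rw [hφ_eq p, norm_mul, Real.norm_eq_abs (sΔ p), abs_of_pos (hsΔpos p)]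
    exact mul_le_mul_of_nonneg_right (hsΔbd p) (norm_nonneg _)
  have hφ1 : Integrable φ (haarT d) := hφ2.integrable one_le_two
  -- integrability of kernels
  have hIint : ∀ p, Integrable (fun t => (Edisp d γ K p t - z)⁻¹) (haarT d) := fun p =>
    Integrable.mono' (integrable_const C⁻¹) (contk d γ z K hz p).aestronglyMeasurable
      (ae_of_all _ fun t => hkbd p t)
  have hGint : ∀ p, Integrable (fun t => (Edisp d γ K p t - z)⁻¹ * φ t) (haarT d) := fun p =>
    hφ1.bdd_mul (c := C⁻¹) (contk d γ z K hz p).aestronglyMeasurable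
      (ae_of_all _ fun t => by rw [Real.norm_eq_abs]; exact hkbd p t)
  set I : (Fin d → Real.Angle) → ℝ :=
    fun p => ∫ t, (Edisp d γ K p t - z)⁻¹ ∂(haarT d) with hIdef
  set G : (Fin d → Real.Angle) → ℝ :=
    fun p => ∫ t, (Edisp d γ K p t - z)⁻¹ * φ t ∂(haarT d) with hGdef
  -- reformulated Birman-Schwinger equation
  have hBS' : ∀ᵐ q ∂(haarT d), Δ q * φ q = μ * G q := by
    filter_upwards [hBS] with q hq
    have h1 : (fun p => sΔ q *
        (Real.sqrt (1 + μ * ∫ t, (Edisp d γ K p t - z)⁻¹ ∂(haarT d)))⁻¹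
        * (Edisp d γ K p q - z)⁻¹ * ψ p)
        = fun p => sΔ q * ((Edisp d γ K q p - z)⁻¹ * φ p) := by
      funext p
      rw [hφ_eq p, Edisp_symm d γ K q p]
      show sΔ q * sΔ p * _ * ψ p = _
      ring
    have h2 : ψ q = μ * (sΔ q * G q) := by
      rw [hq]
      congr 1
      rw [show (∫ p, (Real.sqrt (1 + μ * ∫ t, (Edisp d γ K q t - z)⁻¹ ∂(haarT d)))⁻¹
          * (Real.sqrt (1 + μ * ∫ t, (Edisp d γ K p t - z)⁻¹ ∂(haarT d)))⁻¹
          * (Edisp d γ K p q - z)⁻¹ * ψ p ∂(haarT d))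
        = ∫ p, sΔ q * ((Edisp d γ K q p - z)⁻¹ * φ p) ∂(haarT d) from by rw [← h1]]
      rw [integral_const_mul]
    have hss : sΔ q * sΔ q = (Δ q)⁻¹ := by
      rw [hsΔdef]
      rw [← mul_inv]
      rw [Real.mul_self_sqrt (hΔ q).le]
    have hΔne : Δ q ≠ 0 := (hΔ q).ne'
    rw [hφ_eq q, h2,
      show Δ q * (sΔ q * (μ * (sΔ q * G q))) = μ * (sΔ q * sΔ q * Δ q) * G q from by ring,
      hss, inv_mul_cancel₀ hΔne, mul_one]
  -- measure preserving projections
  have mp_fst : MeasurePreserving Prod.fst ((haarT d).prod (haarT d)) (haarT d) :=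
    ⟨measurable_fst, by rw [Measure.map_fst_prod]; simp⟩
  have mp_snd : MeasurePreserving Prod.snd ((haarT d).prod (haarT d)) (haarT d) :=
    ⟨measurable_snd, by rw [Measure.map_snd_prod]; simp⟩
  -- the two integral identities
  have key0a : ∀ᵐ p ∂(haarT d), (∫ t, f (p, t) ∂(haarT d)) = φ p := by
    filter_upwards [hBS'] with p hp
    have hsplit : (fun t => f (p, t)) = fun t =>
        (-μ * φ p) * (Edisp d γ K p t - z)⁻¹ + μ * ((Edisp d γ K p t - z)⁻¹ * φ t) := by
      funext t
      show -μ * (φ p - φ t) / (Edisp d γ K p t - z) = _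
      rw [div_eq_mul_inv]; ring
    rw [hsplit, integral_add ((hIint p).const_mul _) ((hGint p).const_mul _),
      integral_const_mul, integral_const_mul]
    simp only [hΔdef, hGdef] at hp
    linear_combination -hp
  have key0b : ∀ᵐ q ∂(haarT d), (∫ t, f (t, q) ∂(haarT d)) = -φ q := by
    filter_upwards [hBS'] with q hq
    have hsplit : (fun t => f (t, q)) = fun t =>
        (μ * φ q) * (Edisp d γ K q t - z)⁻¹ + (-μ) * ((Edisp d γ K q t - z)⁻¹ * φ t) := by
      funext t
      show -μ * (φ t - φ q) / (Edisp d γ K t q - z) = _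
      rw [Edisp_symm d γ K t q, div_eq_mul_inv]; ring
    rw [hsplit, integral_add ((hIint q).const_mul _) ((hGint q).const_mul _),
      integral_const_mul, integral_const_mul]
    simp only [hΔdef, hGdef] at hq
    linear_combination hq
  have key1 : ∀ᵐ x ∂((haarT d).prod (haarT d)), (∫ t, f (x.1, t) ∂(haarT d)) = φ x.1 :=
    mp_fst.quasiMeasurePreserving.ae key0a
  have key2 : ∀ᵐ x ∂((haarT d).prod (haarT d)), (∫ t, f (t, x.2) ∂(haarT d)) = -φ x.2 :=
    mp_snd.quasiMeasurePreserving.ae key0b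
  have hfeq : f = fun x => (-μ * (φ x.1 - φ x.2)) * (Edisp d γ K x.1 x.2 - z)⁻¹ := by
    funext x; exact div_eq_mul_inv _ _
  refine ⟨?_, ?_, ?_⟩
  · -- Memℒp
    have hφfst : AEStronglyMeasurable (fun x : _ × _ => φ x.1) ((haarT d).prod (haarT d)) :=
      hφm.comp_quasiMeasurePreserving mp_fst.quasiMeasurePreserving
    have hφsnd : AEStronglyMeasurable (fun x : _ × _ => φ x.2) ((haarT d).prod (haarT d)) :=
      hφm.comp_quasiMeasurePreserving mp_snd.quasiMeasurePreserving
    have hkm2 : Continuous (fun x : _ × _ => (Edisp d γ K x.1 x.2 - z)⁻¹) :=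
      ((continuous_Edisp d γ K).sub continuous_const).inv₀ (fun x => hEne x.1 x.2)
    have hfm : AEStronglyMeasurable f ((haarT d).prod (haarT d)) := by
      rw [hfeq]
      exact ((hφfst.sub hφsnd).const_mul _).mul hkm2.aestronglyMeasurable
    have hsub2 : MemLp (fun x : _ × _ => φ x.1 - φ x.2) 2 ((haarT d).prod (haarT d)) :=
      (hφ2.comp_measurePreserving mp_fst).sub (hφ2.comp_measurePreserving mp_snd)
    refine hsub2.of_le_mul (c := μ * C⁻¹) hfm (ae_of_all _ fun x => ?_)
    rw [hfeq]
    simp only [Real.norm_eq_abs, abs_mul, abs_neg, abs_of_pos hμ]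
    have h1 : |(Edisp d γ K x.1 x.2 - z)⁻¹| ≤ C⁻¹ := hkbd _ _
    calc μ * |φ x.1 - φ x.2| * |(Edisp d γ K x.1 x.2 - z)⁻¹|
        ≤ μ * (|φ x.1 - φ x.2| * C⁻¹) := by
          rw [mul_assoc]
          exact mul_le_mul_of_nonneg_left
            (mul_le_mul_of_nonneg_left h1 (abs_nonneg _)) hμ.le
      _ = μ * C⁻¹ * |φ x.1 - φ x.2| := by ring
  · -- antisymmetry
    intro p q
    show -μ * (φ p - φ q) / (Edisp d γ K p q - z)
      = -(-μ * (φ q - φ p) / (Edisp d γ K q p - z))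
    rw [Edisp_symm d γ K q p]; ring
  · -- eigenvalue equation
    filter_upwards [key1, key2] with x h1 h2
    rw [h1, h2]
    have hb := hEne x.1 x.2
    have hmain : f x * (Edisp d γ K x.1 x.2 - z) = -μ * (φ x.1 - φ x.2) := by
      show (-μ * (φ x.1 - φ x.2) / (Edisp d γ K x.1 x.2 - z)) * _ = _
      exact div_mul_cancel₀ _ hb
    linear_combination hmain
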